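/- Fix d > 0, s > 0, η > 0, and real parameters k₀ and n_eff. For each positive integer M define the array gain of 2M equally spaced pinching antennas as a(M) = (η/(2M)) · | Σ_{n=1}^{M} 2·exp(−i·k₀·√(d² + Δ_n²))·cos(k₀·Δ_n·n_eff) / √(d² + Δ_n²) |², where Δ_n = (n − 1/2)·s. Then lim_{M→∞} a(M) = 0. -/

import Mathlib

open Filter

private lemma aux_tendsto_bound (C : ℝ) :
    Tendsto (fun x : ℝ => C * ((1 + Real.log x) ^ 2 / x)) atTop (nhds 0) := by
  have h : Tendsto (fun x : ℝ => (1 + Real.log x) ^ 2 / x) atTop (nhds 0) := by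
    have h1 : Tendsto (fun x : ℝ => x⁻¹) atTop (nhds 0) := tendsto_inv_atTop_zero
    have h2 : Tendsto (fun x : ℝ => Real.log x ^ 1 / (1 * x + 0)) atTop (nhds 0) :=
      Real.tendsto_pow_log_div_mul_add_atTop 1 0 1 one_ne_zero
    have h3 : Tendsto (fun x : ℝ => Real.log x ^ 2 / (1 * x + 0)) atTop (nhds 0) :=
      Real.tendsto_pow_log_div_mul_add_atTop 1 0 2 one_ne_zero
    have := (h1.add ((h2.const_mul 2).add h3))
    simp only [one_mul, add_zero, pow_one] at this h2 h3
    have heq : (fun x : ℝ => (1 + Real.log x) ^ 2 / x)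
        = fun x : ℝ => x⁻¹ + (2 * (Real.log x / x) + Real.log x ^ 2 / x) := by
      funext x
      ring
    rw [heq]
    simpa using this
  simpa using h.const_mul C

/-- Theorem 1: the array gain of `2M` equally spaced pinching antennas with
spacing `s` vanishes as `M → ∞`. -/
theorem array_gain_equal_spacing_tendsto_zero
    (d s η k₀ neff : ℝ) (hd : 0 < d) (hs : 0 < s) (hη : 0 < η) :
    Tendsto
      (fun M : ℕ =>
        η / (2 * M) *
          ‖∑ n ∈ Finset.Icc 1 M,
              2 * Complex.exp (-Complex.I * k₀ *
                    Real.sqrt (d ^ 2 + (((n : ℝ) - 1 / 2) * s) ^ 2)) *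
                  Real.cos (k₀ * (((n : ℝ) - 1 / 2) * s) * neff) /
                Real.sqrt (d ^ 2 + (((n : ℝ) - 1 / 2) * s) ^ 2)‖ ^ 2)
      atTop (nhds 0) := by
  set a := fun M : ℕ =>
        η / (2 * M) *
          ‖∑ n ∈ Finset.Icc 1 M,
              2 * Complex.exp (-Complex.I * k₀ *
                    Real.sqrt (d ^ 2 + (((n : ℝ) - 1 / 2) * s) ^ 2)) *
                  Real.cos (k₀ * (((n : ℝ) - 1 / 2) * s) * neff) /
                Real.sqrt (d ^ 2 + (((n : ℝ) - 1 / 2) * s) ^ 2)‖ ^ 2 with ha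
  set C : ℝ := η / 2 * (4 / s) ^ 2 with hC
  -- pointwise bound on the sum
  have hsum : ∀ M : ℕ,
      ‖∑ n ∈ Finset.Icc 1 M,
          2 * Complex.exp (-Complex.I * k₀ *
                Real.sqrt (d ^ 2 + (((n : ℝ) - 1 / 2) * s) ^ 2)) *
              Real.cos (k₀ * (((n : ℝ) - 1 / 2) * s) * neff) /
            Real.sqrt (d ^ 2 + (((n : ℝ) - 1 / 2) * s) ^ 2)‖
      ≤ 4 / s * (1 + Real.log M) := by
    intro M
    refine le_trans ((norm_sum_le _ _).trans (Finset.sum_le_sum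
        (g := fun n : ℕ => (4 / s) * (n : ℝ)⁻¹) ?_)) ?_
    · intro n hn
      obtain ⟨hn1, hnM⟩ := Finset.mem_Icc.mp hn
      set Δ : ℝ := ((n : ℝ) - 1 / 2) * s with hΔ
      set r : ℝ := Real.sqrt (d ^ 2 + Δ ^ 2) with hr
      have hn1' : (1 : ℝ) ≤ (n : ℝ) := by exact_mod_cast hn1
      have hΔpos : (n : ℝ) / 2 * s ≤ Δ := by
        have : (n : ℝ) / 2 ≤ (n : ℝ) - 1 / 2 := by linarith
        exact mul_le_mul_of_nonneg_right this hs.le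
      have hhalf : 0 < (n : ℝ) / 2 * s := by positivity
      have hrpos : 0 < r := Real.sqrt_pos.mpr (by positivity)
      have hrge : (n : ℝ) / 2 * s ≤ r := by
        have : (n : ℝ) / 2 * s ≤ Real.sqrt (Δ ^ 2) := by
          rw [Real.sqrt_sq (le_trans hhalf.le hΔpos)]
          exact hΔpos
        refine this.trans (Real.sqrt_le_sqrt (by nlinarith [sq_nonneg d]))
      have hexp : ‖Complex.exp (-Complex.I * k₀ * (r : ℂ))‖ = 1 := by
        rw [Complex.norm_exp]
        have : (-Complex.I * k₀ * (r : ℂ)).re = 0 := by simp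
        rw [this, Real.exp_zero]
      have habs : ‖2 * Complex.exp (-Complex.I * k₀ * (r : ℂ)) *
          (Real.cos (k₀ * Δ * neff) : ℂ) / (r : ℂ)‖ ≤ 2 / r := by
        rw [norm_div, norm_mul, norm_mul, hexp]
        simp only [Complex.norm_real, Real.norm_eq_abs, Complex.norm_two, mul_one]
        rw [abs_of_pos hrpos]
        have : |Real.cos (k₀ * Δ * neff)| ≤ 1 := Real.abs_cos_le_one _
        have h2 : 2 * |Real.cos (k₀ * Δ * neff)| ≤ 2 := by linarith
        exact div_le_div_of_nonneg_right h2 hrpos.le |>.trans_eq rfl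
      refine habs.trans ?_
      have : 2 / r ≤ 2 / ((n : ℝ) / 2 * s) :=
        div_le_div_of_nonneg_left (by norm_num) hhalf hrge
      refine this.trans_eq ?_
      field_simp
      ring
    · rw [← Finset.mul_sum]
      have h4s : 0 ≤ 4 / s := by positivity
      refine mul_le_mul_of_nonneg_left ?_ h4s
      have h := harmonic_le_one_add_log M
      have heq : ((harmonic M : ℚ) : ℝ) = ∑ n ∈ Finset.Icc 1 M, (n : ℝ)⁻¹ := by
        rw [harmonic_eq_sum_Icc]
        push_cast
        rfl
      rw [← heq]
      exact h
  -- squeeze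
  have hb : Tendsto (fun M : ℕ => C * ((1 + Real.log M) ^ 2 / M)) atTop (nhds 0) :=
    (aux_tendsto_bound C).comp tendsto_natCast_atTop_atTop
  refine squeeze_zero' ?_ ?_ hb
  · filter_upwards [eventually_ge_atTop 1] with M hM
    have hM0 : (0 : ℝ) < M := by exact_mod_cast hM
    positivity
  · filter_upwards [eventually_ge_atTop 1] with M hM
    have hM0 : (0 : ℝ) < M := by exact_mod_cast hM
    have hM1 : (1 : ℝ) ≤ M := by exact_mod_cast hM
    have hlog : 0 ≤ Real.log M := Real.log_nonneg hM1
    have hS := hsum M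
    have hSnn : 0 ≤ ‖∑ n ∈ Finset.Icc 1 M,
          2 * Complex.exp (-Complex.I * k₀ *
                Real.sqrt (d ^ 2 + (((n : ℝ) - 1 / 2) * s) ^ 2)) *
              Real.cos (k₀ * (((n : ℝ) - 1 / 2) * s) * neff) /
            Real.sqrt (d ^ 2 + (((n : ℝ) - 1 / 2) * s) ^ 2)‖ := norm_nonneg _
    have hsq : ‖∑ n ∈ Finset.Icc 1 M,
          2 * Complex.exp (-Complex.I * k₀ *
                Real.sqrt (d ^ 2 + (((n : ℝ) - 1 / 2) * s) ^ 2)) *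
              Real.cos (k₀ * (((n : ℝ) - 1 / 2) * s) * neff) /
            Real.sqrt (d ^ 2 + (((n : ℝ) - 1 / 2) * s) ^ 2)‖ ^ 2
        ≤ (4 / s * (1 + Real.log M)) ^ 2 := by
      apply sq_le_sq' (by linarith) hS
    have hcoef : 0 < η / (2 * (M : ℝ)) := by positivity
    calc a M ≤ η / (2 * M) * (4 / s * (1 + Real.log M)) ^ 2 := by
          exact mul_le_mul_of_nonneg_left hsq hcoef.le
      _ = C * ((1 + Real.log M) ^ 2 / M) := by
          rw [hC]
          field_simp
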